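/- Let A be a Noetherian F_1-algebra (every ideal of the commutative monoid-with-zero A is finitely generated, equivalently the ascending chain condition on ideals holds). Then the polynomial F_1-algebra A[x] (the monoid algebra obtained as the wedge sum ⋁_{n∈ℕ} A x^n with the obvious multiplication) is Noetherian. -/

import Mathlib

namespace F1a

/-- An ideal of a monoid with zero. -/
def IsIdeal {M : Type} [MonoidWithZero M] (I : Set M) : Prop :=
  (0 : M) ∈ I ∧ ∀ a x : M, x ∈ I → a * x ∈ I

/-- A finitely generated ideal of a monoid with zero. -/
def IsFG {M : Type} [MonoidWithZero M] (I : Set M) : Prop :=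
  ∃ S : Finset M, (S : Set M) ⊆ I ∧
    I = insert (0 : M) {x : M | ∃ s ∈ S, ∃ a : M, x = a * s}

/-- A monoid with zero is Noetherian if every ideal is finitely generated. -/
def IsNoetherian (M : Type) [MonoidWithZero M] : Prop :=
  ∀ I : Set M, IsIdeal I → IsFG I

variable (A : Type) [CommMonoidWithZero A]

/-- The setoid on `A × ℕ` identifying all pairs with vanishing first coordinate: the wedge
sum `⋁ₙ A xⁿ`. -/
def polySetoid : Setoid (A × ℕ) where
  r p q := p = q ∨ (p.1 = 0 ∧ q.1 = 0)
  iseqv := by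
    constructor
    · intro p; exact Or.inl rfl
    · rintro p q (rfl | ⟨h1, h2⟩)
      · exact Or.inl rfl
      · exact Or.inr ⟨h2, h1⟩
    · rintro p q r h1 h2
      rcases h1 with rfl | ⟨hp, hq⟩
      · exact h2
      · rcases h2 with rfl | ⟨hq', hr⟩
        · exact Or.inr ⟨hp, hq⟩
        · exact Or.inr ⟨hp, hr⟩

/-- The polynomial `F_1`-algebra `A[x] = ⋁ₙ A xⁿ`, with `(a xᵐ)(b xⁿ) = ab x^{m+n}`. -/
def F1Poly : Type := Quotient (polySetoid A)

instance : CommMonoidWithZero (F1Poly A) where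
  zero := Quotient.mk (polySetoid A) (0, 0)
  one := Quotient.mk (polySetoid A) (1, 0)
  mul := Quotient.map₂ (fun p q => (p.1 * q.1, p.2 + q.2)) (by
    rintro ⟨a, m⟩ ⟨a', m'⟩ h ⟨b, n⟩ ⟨b', n'⟩ h'
    rcases h with h | ⟨ha, ha'⟩ <;> rcases h' with h' | ⟨hb, hb'⟩
    · rw [h, h']
    · dsimp only at hb hb' ⊢
      exact Or.inr ⟨by rw [hb, mul_zero], by rw [hb', mul_zero]⟩
    · dsimp only at ha ha' ⊢
      exact Or.inr ⟨by rw [ha, zero_mul], by rw [ha', zero_mul]⟩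
    · dsimp only at ha ha' ⊢
      exact Or.inr ⟨by rw [ha, zero_mul], by rw [ha', zero_mul]⟩)
  mul_assoc := by
    rintro ⟨⟨a, m⟩⟩ ⟨⟨b, n⟩⟩ ⟨⟨c, k⟩⟩
    exact Quotient.sound (Or.inl (by simp [mul_assoc, add_assoc]))
  one_mul := by
    rintro ⟨⟨a, m⟩⟩
    exact Quotient.sound (Or.inl (by simp))
  mul_one := by
    rintro ⟨⟨a, m⟩⟩
    exact Quotient.sound (Or.inl (by simp))
  mul_comm := by
    rintro ⟨⟨a, m⟩⟩ ⟨⟨b, n⟩⟩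
    exact Quotient.sound (Or.inl (by simp [mul_comm, add_comm]))
  zero_mul := by
    rintro ⟨⟨a, m⟩⟩
    exact Quotient.sound (Or.inr ⟨zero_mul a, rfl⟩)
  mul_zero := by
    rintro ⟨⟨a, m⟩⟩
    exact Quotient.sound (Or.inr ⟨mul_zero a, rfl⟩)



end F1a

namespace F1aAux
open F1a

variable {A : Type} [CommMonoidWithZero A]

/-- Abbreviation for the quotient map. -/
def mk (a : A) (n : ℕ) : F1Poly A := Quotient.mk (polySetoid A) (a, n)

lemma mk_mul (a b : A) (m n : ℕ) : mk a m * mk b n = mk (a * b) (m + n) := rfl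

lemma zero_eq : (0 : F1Poly A) = mk (0 : A) 0 := rfl

lemma mk_zero (n : ℕ) : mk (0 : A) n = 0 :=
  Quotient.sound (Or.inr ⟨rfl, rfl⟩)

lemma mk_surj (x : F1Poly A) : ∃ a n, x = mk a n := by
  obtain ⟨⟨a, n⟩⟩ := x
  exact ⟨a, n, rfl⟩

end F1aAux

/-- Hilbert basis theorem over `F_1`: if `A` is a Noetherian `F_1`-algebra (every ideal
of the commutative monoid with zero `A` is finitely generated), then the polynomial
`F_1`-algebra `A[x]` is Noetherian. -/
theorem stmt_2 (A : Type) [CommMonoidWithZero A] (hA : F1a.IsNoetherian A) :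
    F1a.IsNoetherian (F1a.F1Poly A) := by
  classical
  open F1aAux in
  intro I hI
  -- the homogeneous pieces of `I`
  set Iset : ℕ → Set A := fun n => {a : A | mk a n ∈ I} with hIset
  -- each piece is an ideal of `A`
  have hideal : ∀ n, F1a.IsIdeal (Iset n) := by
    intro n
    constructor
    · show mk (0 : A) n ∈ I
      rw [mk_zero]; exact hI.1
    · intro a x hx
      show mk (a * x) n ∈ I
      have : mk (a * x) n = mk a 0 * mk x n := by rw [mk_mul, zero_add]
      rw [this]
      exact hI.2 _ _ hx
  -- the pieces are increasing
  have hmono : ∀ m n : ℕ, m ≤ n → Iset m ⊆ Iset n := by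
    intro m n hmn
    induction n, hmn using Nat.le_induction with
    | base => exact fun _ h => h
    | succ n hmn ih =>
        intro a ha
        have ha' : mk a n ∈ I := ih ha
        show mk a (n + 1) ∈ I
        have : mk a (n + 1) = mk (1 : A) 1 * mk a n := by
          rw [mk_mul, one_mul, add_comm]
        rw [this]
        exact hI.2 _ _ ha'
  -- choose finite generators for each piece
  choose T hT1 hT2 using fun n => hA (Iset n) (hideal n)
  -- the union of the pieces is an ideal of `A`
  set U : Set A := {a : A | ∃ n, a ∈ Iset n} with hU
  have hUideal : F1a.IsIdeal U := by
    constructor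
    · exact ⟨0, (hideal 0).1⟩
    · rintro a x ⟨n, hx⟩
      exact ⟨n, (hideal n).2 a x hx⟩
  obtain ⟨F, hF1, hF2⟩ := hA U hUideal
  -- find a bound `N` such that all elements of `F` lie in `Iset N`
  have hFmem : ∀ s ∈ F, ∃ k, s ∈ Iset k := fun s hs => hF1 hs
  choose f hf using hFmem
  set N : ℕ := F.sup (fun s => if h : s ∈ F then f s h else 0) with hN
  have hFN : ∀ s ∈ F, s ∈ Iset N := by
    intro s hs
    have hle : f s hs ≤ N := by
      have := Finset.le_sup (f := fun s => if h : s ∈ F then f s h else 0) hs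
      simpa [dif_pos hs] using this
    exact hmono _ _ hle (hf s hs)
  -- every piece is contained in `Iset N`
  have hUN : U ⊆ Iset N := by
    intro x hx
    rw [hF2] at hx
    rcases hx with rfl | ⟨s, hs, c, rfl⟩
    · exact (hideal N).1
    · exact (hideal N).2 c s (hFN s hs)
  have hpiece : ∀ m, Iset m ⊆ Iset N := fun m a ha => hUN ⟨m, ha⟩
  -- the generating set for `I`
  set S : Finset (F1a.F1Poly A) :=
    (Finset.range (N + 1)).biUnion (fun n => (T n).image (fun s => mk s n)) with hS
  refine ⟨S, ?_, ?_⟩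
  · -- S ⊆ I
    intro x hx
    simp only [hS, Finset.coe_biUnion, Finset.mem_coe, Finset.mem_range, Set.mem_iUnion,
      Finset.coe_image, Set.mem_image] at hx
    obtain ⟨n, _, s, hs, rfl⟩ := hx
    exact (hT1 n) hs
  · apply Set.eq_of_subset_of_subset
    · -- I ⊆ generated set
      intro x hx
      obtain ⟨a, m, rfl⟩ := mk_surj x
      have ham : a ∈ Iset m := hx
      have han : a ∈ Iset (min m N) := by
        rcases le_total m N with h | h
        · rwa [min_eq_left h]
        · rw [min_eq_right h]; exact hpiece m ham
      rw [hT2 (min m N)] at han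
      rcases han with rfl | ⟨s, hs, c, rfl⟩
      · rw [mk_zero]; exact Set.mem_insert _ _
      · right
        refine ⟨mk s (min m N), ?_, mk c (m - min m N), ?_⟩
        · simp only [hS, Finset.mem_biUnion, Finset.mem_range, Finset.mem_image]
          exact ⟨min m N, Nat.lt_succ_of_le (min_le_right m N), s, hs, rfl⟩
        · rw [mk_mul, Nat.sub_add_cancel (min_le_left m N)]
    · -- generated set ⊆ I
      intro x hx
      rcases hx with rfl | ⟨s, hs, c, rfl⟩
      · exact hI.1
      · have hsI : s ∈ I := by
          simp only [hS, Finset.mem_biUnion, Finset.mem_range, Finset.mem_image] at hs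
          obtain ⟨n, _, t, ht, rfl⟩ := hs
          exact (hT1 n) ht
        exact hI.2 c s hsI
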